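/- Let k ≥ 4 and let G_k be the graph obtained from the complete graph K_k by attaching one pendant leaf to each vertex. Then for any edge e inside the k-clique, γ_g'(G_k) = k = γ_g'(G_k − e). -/
import Mathlib


open Classical

noncomputable section

namespace DomGame

variable {V : Type*} [Fintype V]

/-- Closed neighborhood of `v` as a `Finset`. -/
noncomputable def N (G : SimpleGraph V) (v : V) : Finset V :=
  Finset.univ.filter (fun u => G.Adj v u ∨ u = v)

/-- Legal moves given the set `S` of already dominated vertices. -/
noncomputable def moves (G : SimpleGraph V) (S : Finset V) : Finset V :=
  Finset.univ.filter (fun v => ¬ N G v ⊆ S)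

lemma card_lt {G : SimpleGraph V} {S : Finset V} (v : V) (hv : v ∈ moves G S) :
    (Finset.univ \ (S ∪ N G v)).card < (Finset.univ \ S).card := by
  simp only [moves, Finset.mem_filter] at hv
  obtain ⟨u, hu, hus⟩ := Finset.not_subset.mp hv.2
  apply Finset.card_lt_card
  refine ⟨Finset.sdiff_subset_sdiff (le_refl _) Finset.subset_union_left, ?_⟩
  intro hsub
  have := hsub (Finset.mem_sdiff.mpr ⟨Finset.mem_univ u, hus⟩)
  rw [Finset.mem_sdiff, Finset.mem_union] at this
  exact this.2 (Or.inr hu)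

mutual
/-- Number of moves with optimal play when it is Dominator's turn and
`S` is the set of already dominated vertices. -/
noncomputable def gameD (G : SimpleGraph V) (S : Finset V) : ℕ :=
  if h : (moves G S).Nonempty then
    1 + (moves G S).attach.inf' (by simpa using h)
      (fun v => gameS G (S ∪ N G v.1))
  else 0
termination_by (Finset.univ \ S).card
decreasing_by exact card_lt v.1 v.2

/-- Number of moves with optimal play when it is Staller's turn. -/
noncomputable def gameS (G : SimpleGraph V) (S : Finset V) : ℕ :=
  if h : (moves G S).Nonempty then
    1 + (moves G S).attach.sup' (by simpa using h)
      (fun v => gameD G (S ∪ N G v.1))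
  else 0
termination_by (Finset.univ \ S).card
decreasing_by exact card_lt v.1 v.2
end

/-- The (Dominator-start) game domination number. -/
noncomputable def gammaG (G : SimpleGraph V) : ℕ := gameD G ∅

/-- The Staller-start game domination number. -/
noncomputable def gammaG' (G : SimpleGraph V) : ℕ := gameS G ∅

end DomGame

open DomGame

/-- The graph obtained from `K_k` (on the `inl` vertices) by attaching a
pendant leaf `inr i` to each clique vertex `inl i`. -/
noncomputable def cliqueWithLeaves (k : ℕ) : SimpleGraph (Fin k ⊕ Fin k) :=
  SimpleGraph.fromRel (fun a b =>
    match a, b with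
    | Sum.inl _, Sum.inl _ => True
    | Sum.inl i, Sum.inr j => i = j
    | _, _ => False)


----------------------------------------------------------------
-- Auxiliary development
----------------------------------------------------------------

namespace CWLAux

open DomGame

section Generic

variable {V : Type*} [Fintype V] {G : SimpleGraph V} {S : Finset V}

lemma mem_moves {v : V} : v ∈ moves G S ↔ ¬ N G v ⊆ S := by
  unfold moves
  rw [Finset.mem_filter]
  simp

lemma mem_N {v u : V} : u ∈ N G v ↔ G.Adj v u ∨ u = v := by
  unfold N
  rw [Finset.mem_filter]
  simp

lemma self_mem_N (v : V) : v ∈ N G v := mem_N.mpr (Or.inr rfl)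

lemma eq_univ_of_no_moves (h : ¬ (moves G S).Nonempty) : S = Finset.univ := by
  refine Finset.eq_univ_of_forall (fun v => ?_)
  have hs : N G v ⊆ S := by
    by_contra hc
    exact h ⟨v, mem_moves.mpr hc⟩
  exact hs (self_mem_N v)

lemma gameD_zero (h : ¬ (moves G S).Nonempty) : gameD G S = 0 := by
  rw [gameD, dif_neg h]

lemma gameS_zero (h : ¬ (moves G S).Nonempty) : gameS G S = 0 := by
  rw [gameS, dif_neg h]

lemma gameD_le_of_mem {v : V} (hv : v ∈ moves G S) :
    gameD G S ≤ 1 + gameS G (S ∪ N G v) := by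
  have h : (moves G S).Nonempty := ⟨v, hv⟩
  rw [gameD, dif_pos h]
  have key : ∀ H : ((moves G S).attach).Nonempty,
      (moves G S).attach.inf' H (fun w => gameS G (S ∪ N G w.1)) ≤
        gameS G (S ∪ N G v) := by
    intro H
    exact (Finset.inf'_le_iff H).mpr ⟨⟨v, hv⟩, Finset.mem_attach _ _, le_rfl⟩
  exact Nat.add_le_add_left (key _) 1

lemma le_gameD (h : (moves G S).Nonempty) (a : ℕ)
    (hall : ∀ v ∈ moves G S, a ≤ 1 + gameS G (S ∪ N G v)) : a ≤ gameD G S := by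
  rw [gameD, dif_pos h]
  have key : ∀ H : ((moves G S).attach).Nonempty,
      a ≤ 1 + (moves G S).attach.inf' H (fun v => gameS G (S ∪ N G v.1)) := by
    intro H
    obtain ⟨b, hb, he⟩ := Finset.exists_mem_eq_inf' H (fun v => gameS G (S ∪ N G v.1))
    rw [he]
    exact hall b.1 b.2
  exact key _

lemma le_gameS (h : (moves G S).Nonempty) (a : ℕ)
    (hall : ∀ v ∈ moves G S, a ≤ 1 + gameD G (S ∪ N G v)) : a ≤ gameS G S := by
  rw [gameS, dif_pos h]
  have key : ∀ H : ((moves G S).attach).Nonempty,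
      a ≤ 1 + (moves G S).attach.sup' H (fun v => gameD G (S ∪ N G v.1)) := by
    intro H
    obtain ⟨b, hb⟩ := H
    exact le_trans (hall b.1 b.2)
      (Nat.add_le_add_left (Finset.le_sup' (fun v => gameD G (S ∪ N G v.1)) hb) 1)
  exact key _

lemma gameD_eq (h : (moves G S).Nonempty) (c : ℕ)
    (hall : ∀ v ∈ moves G S, gameS G (S ∪ N G v) = c) : gameD G S = 1 + c := by
  rw [gameD, dif_pos h]
  have key : ∀ H : ((moves G S).attach).Nonempty,
      1 + (moves G S).attach.inf' H (fun v => gameS G (S ∪ N G v.1)) = 1 + c := by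
    intro H
    obtain ⟨b, hb, he⟩ := Finset.exists_mem_eq_inf' H (fun v => gameS G (S ∪ N G v.1))
    rw [he, hall b.1 b.2]
  exact key _

lemma gameS_eq (h : (moves G S).Nonempty) (c : ℕ)
    (hall : ∀ v ∈ moves G S, gameD G (S ∪ N G v) = c) : gameS G S = 1 + c := by
  rw [gameS, dif_pos h]
  have key : ∀ H : ((moves G S).attach).Nonempty,
      1 + (moves G S).attach.sup' H (fun v => gameD G (S ∪ N G v.1)) = 1 + c := by
    intro H
    obtain ⟨b, hb, he⟩ := Finset.exists_mem_eq_sup' H (fun v => gameD G (S ∪ N G v.1))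
    rw [he, hall b.1 b.2]
  exact key _

end Generic

section Master

variable {V : Type*} [Fintype V] {k : ℕ}
variable (G : SimpleGraph V) (cl lf : Fin k → V)

/-- The set of pendant leaves. -/
noncomputable def Leaves (lf : Fin k → V) : Finset V :=
  Finset.univ.filter (fun u => ∃ b, u = lf b)

lemma mem_Leaves_lf (a : Fin k) : lf a ∈ Leaves lf := by
  simp only [Leaves, Finset.mem_filter, Finset.mem_univ, true_and]
  exact ⟨a, rfl⟩

lemma isLeaf_of_mem_Leaves {u : V} (h : u ∈ Leaves lf) : ∃ b, u = lf b := by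
  simpa [Leaves] using h

lemma card_Leaves (hinj : Function.Injective lf) : (Leaves lf).card = k := by
  have h : Leaves lf = Finset.univ.map ⟨lf, hinj⟩ := by
    ext u
    simp only [Leaves, Finset.mem_filter, Finset.mem_univ, true_and, Finset.mem_map,
      Function.Embedding.coeFn_mk]
    constructor
    · rintro ⟨a, rfl⟩
      exact ⟨a, rfl⟩
    · rintro ⟨a, rfl⟩
      exact ⟨a, rfl⟩
  rw [h, Finset.card_map, Finset.card_univ, Fintype.card_fin]

variable (hLf : ∀ v : V, ∃ a : Fin k, ∀ u ∈ N G v, ∀ b, u = lf b → b = a)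

include hLf

lemma leaf_step (S : Finset V) (v : V) :
    (Leaves lf \ S).card ≤ (Leaves lf \ (S ∪ N G v)).card + 1 := by
  obtain ⟨a, ha⟩ := hLf v
  have hsub : Leaves lf \ S ⊆ (Leaves lf \ (S ∪ N G v)) ∪ {lf a} := by
    intro u hu
    rw [Finset.mem_sdiff] at hu
    by_cases hn : u ∈ N G v
    · obtain ⟨b, rfl⟩ := isLeaf_of_mem_Leaves lf hu.1
      have hb : b = a := ha _ hn b rfl
      subst hb
      exact Finset.mem_union_right _ (Finset.mem_singleton_self _)
    · exact Finset.mem_union_left _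
        (Finset.mem_sdiff.mpr ⟨hu.1, by simp [hn, hu.2]⟩)
  calc (Leaves lf \ S).card ≤ _ := Finset.card_le_card hsub
    _ ≤ (Leaves lf \ (S ∪ N G v)).card + 1 :=
        le_trans (Finset.card_union_le _ _) (by simp)

lemma lower : ∀ n, ∀ S : Finset V, (Finset.univ \ S).card ≤ n →
    (Leaves lf \ S).card ≤ gameD G S ∧ (Leaves lf \ S).card ≤ gameS G S := by
  intro n
  induction n with
  | zero =>
    intro S hS
    have hSu : S = Finset.univ := by
      have h0 : Finset.univ \ S = ∅ := Finset.card_eq_zero.mp (Nat.le_zero.mp hS)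
      have hsub := Finset.sdiff_eq_empty_iff_subset.mp h0
      exact Finset.eq_univ_of_forall (fun v => hsub (Finset.mem_univ v))
    subst hSu
    have he : Leaves lf \ Finset.univ = ∅ :=
      Finset.sdiff_eq_empty_iff_subset.mpr (Finset.subset_univ _)
    simp [he]
  | succ n ih =>
    intro S hS
    by_cases h : (moves G S).Nonempty
    · constructor
      · refine le_gameD h _ (fun v hv => ?_)
        have hlt := card_lt v hv
        have hih := (ih (S ∪ N G v) (by omega)).2
        have hstep := leaf_step G lf hLf S v
        omega
      · refine le_gameS h _ (fun v hv => ?_)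
        have hlt := card_lt v hv
        have hih := (ih (S ∪ N G v) (by omega)).1
        have hstep := leaf_step G lf hLf S v
        omega
    · have hSu : S = Finset.univ := eq_univ_of_no_moves h
      subst hSu
      have he : Leaves lf \ Finset.univ = ∅ :=
        Finset.sdiff_eq_empty_iff_subset.mpr (Finset.subset_univ _)
      simp [he]

variable (hsurj : ∀ v : V, (∃ a, v = cl a) ∨ (∃ a, v = lf a))

include hsurj

lemma endgame : ∀ n, ∀ S : Finset V, (Finset.univ \ S).card ≤ n →
    (∀ a, cl a ∈ S) →
    gameD G S = (Finset.univ \ S).card ∧ gameS G S = (Finset.univ \ S).card := by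
  intro n
  induction n with
  | zero =>
    intro S hS _
    have hSu : S = Finset.univ := by
      have h0 : Finset.univ \ S = ∅ := Finset.card_eq_zero.mp (Nat.le_zero.mp hS)
      have hsub := Finset.sdiff_eq_empty_iff_subset.mp h0
      exact Finset.eq_univ_of_forall (fun v => hsub (Finset.mem_univ v))
    subst hSu
    have hm : ¬ (moves G Finset.univ).Nonempty := by
      rintro ⟨v, hv⟩
      exact (mem_moves.mp hv) (Finset.subset_univ _)
    rw [gameD_zero hm, gameS_zero hm]
    simp
  | succ n ih =>
    intro S hS hcl
    by_cases h : (moves G S).Nonempty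
    · have key : ∀ v ∈ moves G S,
          (Finset.univ \ (S ∪ N G v)).card + 1 = (Finset.univ \ S).card := by
        intro v hv
        obtain ⟨u, hun, hus⟩ := Finset.not_subset.mp (mem_moves.mp hv)
        obtain ⟨av, hav⟩ := hLf v
        have hub : ∃ b, u = lf b := by
          rcases hsurj u with ⟨a, rfl⟩ | hb
          · exact absurd (hcl a) hus
          · exact hb
        obtain ⟨bu, rfl⟩ := hub
        have hbu : bu = av := hav _ hun bu rfl
        subst hbu
        have hSmem : lf bu ∈ Finset.univ \ S :=
          Finset.mem_sdiff.mpr ⟨Finset.mem_univ _, hus⟩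
        have heq : Finset.univ \ (S ∪ N G v) = (Finset.univ \ S).erase (lf bu) := by
          ext w
          simp only [Finset.mem_sdiff, Finset.mem_union, Finset.mem_erase,
            Finset.mem_univ, true_and, not_or]
          constructor
          · rintro ⟨hw1, hw2⟩
            exact ⟨fun hwe => hw2 (by rw [hwe]; exact hun), hw1⟩
          · rintro ⟨hw1, hw2⟩
            refine ⟨hw2, fun hn => ?_⟩
            rcases hsurj w with ⟨a, rfl⟩ | ⟨a, rfl⟩
            · exact hw2 (hcl a)
            · exact hw1 (by rw [hav _ hn a rfl])
        rw [heq, Finset.card_erase_of_mem hSmem]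
        have hpos := Finset.card_pos.mpr ⟨_, hSmem⟩
        omega
      have hone : 1 ≤ (Finset.univ \ S).card := by
        obtain ⟨v, hv⟩ := h
        have := key v hv
        omega
      have branch : ∀ v ∈ moves G S,
          gameD G (S ∪ N G v) = (Finset.univ \ S).card - 1 ∧
          gameS G (S ∪ N G v) = (Finset.univ \ S).card - 1 := by
        intro v hv
        have hk := key v hv
        have hcl' : ∀ a, cl a ∈ S ∪ N G v :=
          fun a => Finset.mem_union_left _ (hcl a)
        have hih := ih (S ∪ N G v) (by omega) hcl'
        constructor
        · rw [hih.1]; omega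
        · rw [hih.2]; omega
      constructor
      · rw [gameD_eq h ((Finset.univ \ S).card - 1) (fun v hv => (branch v hv).2)]
        omega
      · rw [gameS_eq h ((Finset.univ \ S).card - 1) (fun v hv => (branch v hv).1)]
        omega
    · have hSu : S = Finset.univ := eq_univ_of_no_moves h
      subst hSu
      rw [gameD_zero h, gameS_zero h]
      simp

end Master

lemma master {V : Type*} [Fintype V] {k : ℕ} (hk : 4 ≤ k) (i j : Fin k)
    (G : SimpleGraph V) (cl lf : Fin k → V)
    (hinj : Function.Injective lf)
    (hsurj : ∀ v : V, (∃ a, v = cl a) ∨ (∃ a, v = lf a))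
    (hnecl : ∀ a b : Fin k, lf a ≠ cl b)
    (hA : ∀ a b : Fin k, lf b ∈ N G (cl a) ↔ b = a)
    (hB : ∀ (a : Fin k) (u : V), u ∈ N G (lf a) ↔ u = cl a ∨ u = lf a)
    (hC : ∀ b : Fin k, b ≠ i → b ≠ j → ∀ c, cl c ∈ N G (cl b)) :
    gammaG' G = k := by
  haveI : NeZero k := ⟨by omega⟩
  -- every vertex has a unique potential new leaf in its closed neighborhood
  have hIdx : ∀ v : V, ∃ a : Fin k, lf a ∈ N G v ∧
      (∀ u ∈ N G v, ∀ b, u = lf b → b = a) := by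
    intro v
    rcases hsurj v with ⟨a, rfl⟩ | ⟨a, rfl⟩
    · refine ⟨a, (hA a a).mpr rfl, fun u hu b hub => ?_⟩
      subst hub
      exact (hA a b).mp hu
    · refine ⟨a, (hB a (lf a)).mpr (Or.inr rfl), fun u hu b hub => ?_⟩
      subst hub
      rcases (hB a (lf b)).mp hu with h | h
      · exact absurd h (hnecl b a)
      · exact hinj h
  have hLf : ∀ v : V, ∃ a : Fin k, ∀ u ∈ N G v, ∀ b, u = lf b → b = a := by
    intro v
    obtain ⟨a, _, ha⟩ := hIdx v
    exact ⟨a, ha⟩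
  have branch : ∀ v : V, gameD G (N G v) = k - 1 := by
    intro v
    obtain ⟨av, havN, havU⟩ := hIdx v
    obtain ⟨b, hbmem⟩ : ∃ b : Fin k, b ∉ ({av, i, j} : Finset (Fin k)) := by
      by_contra hc
      push_neg at hc
      have h1 : (Finset.univ : Finset (Fin k)).card ≤ ({av, i, j} : Finset (Fin k)).card :=
        Finset.card_le_card (fun x _ => hc x)
      have h3 : ({av, i, j} : Finset (Fin k)).card ≤ 3 := by
        apply le_trans (Finset.card_insert_le _ _)
        have h2 := Finset.card_insert_le i ({j} : Finset (Fin k))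
        simp only [Finset.card_singleton] at h2
        omega
      rw [Finset.card_univ, Fintype.card_fin] at h1
      omega
    simp only [Finset.mem_insert, Finset.mem_singleton, not_or] at hbmem
    obtain ⟨hbv, hbi, hbj⟩ := hbmem
    have hmove : cl b ∈ moves G (N G v) := by
      refine mem_moves.mpr (fun hsub => ?_)
      exact hbv (havU _ (hsub ((hA b b).mpr rfl)) b rfl)
    have hub := gameD_le_of_mem hmove
    have hcl : ∀ a, cl a ∈ N G v ∪ N G (cl b) :=
      fun a => Finset.mem_union_right _ (hC b hbi hbj a)
    have hTcard : (Finset.univ \ (N G v ∪ N G (cl b))).card ≤ k - 2 := by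
      have hsub : Finset.univ \ (N G v ∪ N G (cl b)) ⊆
          ((Leaves lf).erase (lf av)).erase (lf b) := by
        intro u hu
        rw [Finset.mem_sdiff, Finset.mem_union] at hu
        push_neg at hu
        obtain ⟨-, hu1, hu2⟩ := hu
        rcases hsurj u with ⟨c, rfl⟩ | ⟨c, rfl⟩
        · exact absurd (hC b hbi hbj c) hu2
        · refine Finset.mem_erase.mpr ⟨?_, Finset.mem_erase.mpr ⟨?_, mem_Leaves_lf lf c⟩⟩
          · intro hcb
            exact hu2 (by rw [hcb]; exact (hA b b).mpr rfl)
          · intro hcv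
            exact hu1 (by rw [hcv]; exact havN)
      have hc1 : lf av ∈ Leaves lf := mem_Leaves_lf lf _
      have hc2 : lf b ∈ (Leaves lf).erase (lf av) :=
        Finset.mem_erase.mpr ⟨fun hbe => hbv (hinj hbe), mem_Leaves_lf lf _⟩
      have hle := Finset.card_le_card hsub
      rw [Finset.card_erase_of_mem hc2, Finset.card_erase_of_mem hc1,
        card_Leaves lf hinj] at hle
      omega
    have hend := (endgame G cl lf hLf hsurj (Finset.univ \ (N G v ∪ N G (cl b))).card
      (N G v ∪ N G (cl b)) le_rfl hcl).2
    have hlow := (lower G lf hLf (Finset.univ \ N G v).card (N G v) le_rfl).1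
    have hLv : (Leaves lf \ N G v) = (Leaves lf).erase (lf av) := by
      ext u
      simp only [Finset.mem_sdiff, Finset.mem_erase]
      constructor
      · rintro ⟨h1, h2⟩
        exact ⟨fun hwe => h2 (by rw [hwe]; exact havN), h1⟩
      · rintro ⟨h1, h2⟩
        refine ⟨h2, fun hn => h1 ?_⟩
        obtain ⟨c, rfl⟩ := isLeaf_of_mem_Leaves lf h2
        rw [havU _ hn c rfl]
    rw [hLv, Finset.card_erase_of_mem (mem_Leaves_lf lf _), card_Leaves lf hinj] at hlow
    omega
  have hmv : cl 0 ∈ moves G (∅ : Finset V) := by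
    refine mem_moves.mpr (fun hsub => ?_)
    exact absurd (hsub (self_mem_N _)) (Finset.notMem_empty _)
  have hne : (moves G (∅ : Finset V)).Nonempty := ⟨_, hmv⟩
  have hfin := gameS_eq hne (k - 1) (fun v hv => by
    rw [Finset.empty_union]; exact branch v)
  rw [gammaG', hfin]
  omega

end CWLAux

open CWLAux in
lemma cwl_hA (k : ℕ) (a b : Fin k) :
    Sum.inr b ∈ N (cliqueWithLeaves k) (Sum.inl a) ↔ b = a := by
  rw [mem_N]
  simp [cliqueWithLeaves]
  exact eq_comm

open CWLAux in
lemma cwl_hB (k : ℕ) (a : Fin k) (u : Fin k ⊕ Fin k) :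
    u ∈ N (cliqueWithLeaves k) (Sum.inr a) ↔ u = Sum.inl a ∨ u = Sum.inr a := by
  rw [mem_N]
  cases u <;> simp [cliqueWithLeaves, eq_comm]

open CWLAux in
lemma cwl_hC (k : ℕ) (b c : Fin k) :
    Sum.inl c ∈ N (cliqueWithLeaves k) (Sum.inl b) := by
  rw [mem_N]
  simp only [cliqueWithLeaves, SimpleGraph.fromRel_adj]
  rcases eq_or_ne b c with rfl | h
  · right; rfl
  · left; exact ⟨by simpa using h, Or.inl trivial⟩

open CWLAux in
lemma cwld_hA (k : ℕ) (i j : Fin k) (a b : Fin k) :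
    Sum.inr b ∈ N ((cliqueWithLeaves k).deleteEdges {s(Sum.inl i, Sum.inl j)}) (Sum.inl a) ↔
      b = a := by
  rw [mem_N]
  simp [cliqueWithLeaves, SimpleGraph.deleteEdges_adj, Sym2.eq_iff]
  exact eq_comm

open CWLAux in
lemma cwld_hB (k : ℕ) (i j : Fin k) (a : Fin k) (u : Fin k ⊕ Fin k) :
    u ∈ N ((cliqueWithLeaves k).deleteEdges {s(Sum.inl i, Sum.inl j)}) (Sum.inr a) ↔
      u = Sum.inl a ∨ u = Sum.inr a := by
  rw [mem_N]
  cases u <;> simp [cliqueWithLeaves, SimpleGraph.deleteEdges_adj, Sym2.eq_iff, eq_comm]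

open CWLAux in
lemma cwld_hC (k : ℕ) (i j : Fin k) (b c : Fin k) (hbi : b ≠ i) (hbj : b ≠ j) :
    Sum.inl c ∈ N ((cliqueWithLeaves k).deleteEdges {s(Sum.inl i, Sum.inl j)}) (Sum.inl b) := by
  rw [mem_N]
  simp only [SimpleGraph.deleteEdges_adj, cliqueWithLeaves, SimpleGraph.fromRel_adj,
    Set.mem_singleton_iff, Sym2.eq_iff]
  rcases eq_or_ne b c with rfl | h
  · right; rfl
  · left
    refine ⟨⟨by simpa using h, Or.inl trivial⟩, ?_⟩
    rintro (⟨h1, h2⟩ | ⟨h1, h2⟩) <;> simp_all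

lemma sum_surj (k : ℕ) (v : Fin k ⊕ Fin k) :
    (∃ a, v = Sum.inl a) ∨ (∃ a, v = Sum.inr a) := by
  cases v with
  | inl a => exact Or.inl ⟨a, rfl⟩
  | inr a => exact Or.inr ⟨a, rfl⟩

/-- For `k ≥ 4` and `G_k` the complete graph `K_k` with one pendant leaf
attached to each vertex, `γ_g'(G_k) = k = γ_g'(G_k − e)` for any edge `e`
inside the `k`-clique. -/
theorem gameS_clique_with_leaves (k : ℕ) (hk : 4 ≤ k) (i j : Fin k) (hij : i ≠ j) :
    gammaG' (cliqueWithLeaves k) = k ∧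
    gammaG' ((cliqueWithLeaves k).deleteEdges {s(Sum.inl i, Sum.inl j)}) = k := by
  constructor
  · exact CWLAux.master hk i j _ Sum.inl Sum.inr Sum.inr_injective (sum_surj k)
      (fun a b h => Sum.inr_ne_inl h) (cwl_hA k) (cwl_hB k)
      (fun b _ _ c => cwl_hC k b c)
  · exact CWLAux.master hk i j _ Sum.inl Sum.inr Sum.inr_injective (sum_surj k)
      (fun a b h => Sum.inr_ne_inl h) (cwld_hA k i j) (cwld_hB k i j)
      (fun b hbi hbj c => cwld_hC k i j b c hbi hbj)
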